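/- (Schmidt-number criterion from projections.) Let φ ∈ H be a unit vector with Schmidt decomposition φ = Σ_{k=1}^{d} κ_k e_k ⊗ f_k, where d = min(d_A, d_B) and κ_1 ≥ κ_2 ≥ … ≥ κ_d ≥ 0, and let ρ be a density operator on H. If ⟨φ, ρ φ⟩ > Σ_{k=1}^{r} κ_k², then ρ has Schmidt number greater than r, i.e., ρ ∉ S_r. -/

import Mathlib

open scoped ComplexOrder InnerProductSpace

set_option maxHeartbeats 800000

noncomputable section

namespace SNpaper

/-- Elementary tensor `x ⊗ y` of vectors, as a vector on the product index set. -/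
def tensorVec {dA dB : ℕ} (x : Fin dA → ℂ) (y : Fin dB → ℂ) : Fin dA × Fin dB → ℂ :=
  fun p => x p.1 * y p.2

/-- `ψ` has Schmidt rank at most `r`. -/
def SchmidtRankLE {dA dB : ℕ} (r : ℕ) (ψ : Fin dA × Fin dB → ℂ) : Prop :=
  ∃ (x : Fin r → Fin dA → ℂ) (y : Fin r → Fin dB → ℂ),
    ψ = ∑ k, tensorVec (x k) (y k)

/-- The expectation value `⟨ψ, L ψ⟩`. -/
def expVal {dA dB : ℕ} (L : Matrix (Fin dA × Fin dB) (Fin dA × Fin dB) ℂ)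
    (ψ : Fin dA × Fin dB → ℂ) : ℂ :=
  dotProduct (star ψ) (L.mulVec ψ)

/-- `ψ` is a unit vector. -/
def IsUnitVec {dA dB : ℕ} (ψ : Fin dA × Fin dB → ℂ) : Prop :=
  dotProduct (star ψ) ψ = 1

/-- `f_r(L)`: the maximal expectation value of `L` on unit vectors of Schmidt rank at most `r`. -/
def fr {dA dB : ℕ} (r : ℕ) (L : Matrix (Fin dA × Fin dB) (Fin dA × Fin dB) ℂ) : ℝ :=
  sSup { t | ∃ ψ, IsUnitVec ψ ∧ SchmidtRankLE r ψ ∧ (expVal L ψ).re = t }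

/-- The rank-one projector `|ψ⟩⟨ψ|` as a matrix. -/
def projOp {n : Type*} (ψ : n → ℂ) : Matrix n n ℂ :=
  Matrix.vecMulVec ψ (star ψ)

/-- `S_r`: states of Schmidt number at most `r` (finite convex combinations of projectors
onto unit vectors of Schmidt rank at most `r`). -/
def SNle (dA dB r : ℕ) : Set (Matrix (Fin dA × Fin dB) (Fin dA × Fin dB) ℂ) :=
  { σ | ∃ (N : ℕ) (p : Fin N → ℝ) (ψ : Fin N → (Fin dA × Fin dB → ℂ)),
      (∀ i, 0 ≤ p i) ∧ (∑ i, p i = 1) ∧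
      (∀ i, IsUnitVec (ψ i)) ∧ (∀ i, SchmidtRankLE r (ψ i)) ∧
      σ = ∑ i, (p i : ℂ) • projOp (ψ i) }

/-- An orthonormal family of vectors. -/
def ONFam {n m : ℕ} (e : Fin m → Fin n → ℂ) : Prop :=
  ∀ k l, dotProduct (star (e k)) (e l) = if k = l then 1 else 0


def toE {n : ℕ} (v : Fin n → ℂ) : EuclideanSpace ℂ (Fin n) := WithLp.toLp 2 v

lemma inner_toE {n : ℕ} (x y : Fin n → ℂ) :
    ⟪toE x, toE y⟫_ℂ = dotProduct (star x) y := by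
  simp [toE, PiLp.inner_apply, dotProduct, RCLike.inner_apply, mul_comm]

lemma onfam_orthonormal {n m : ℕ} {e : Fin m → Fin n → ℂ} (h : ONFam e) :
    Orthonormal ℂ (fun k => toE (e k)) := by
  rw [orthonormal_iff_ite]
  intro i j
  rw [inner_toE, h i j]

lemma dot_tensor {dA dB : ℕ} (e : Fin dA → ℂ) (f : Fin dB → ℂ) (x : Fin dA → ℂ)
    (y : Fin dB → ℂ) :
    dotProduct (star (tensorVec e f)) (tensorVec x y)
      = dotProduct (star e) x * dotProduct (star f) y := by
  simp only [dotProduct, tensorVec, Pi.star_apply, Fintype.sum_prod_type,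
    Finset.sum_mul, Finset.mul_sum, star_mul']
  rw [Finset.sum_comm]
  refine Finset.sum_congr rfl fun b _ => Finset.sum_congr rfl fun a _ => by ring

lemma norm_sq_toE {n : ℕ} (v : Fin n → ℂ) :
    ‖toE v‖ ^ 2 = ∑ b, ‖v b‖ ^ 2 := by
  rw [@norm_sq_eq_re_inner ℂ, inner_toE]
  simp [dotProduct, ← Complex.normSq_eq_norm_sq, Complex.normSq_apply]

lemma sum_dotProduct' {n : Type*} [Fintype n] {ι : Type*} (s : Finset ι)
    (v : ι → n → ℂ) (w : n → ℂ) :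
    dotProduct (∑ k ∈ s, v k) w = ∑ k ∈ s, dotProduct (v k) w := by
  simp only [dotProduct, Finset.sum_apply, Finset.sum_mul]
  rw [Finset.sum_comm]

lemma dotProduct_sum' {n : Type*} [Fintype n] {ι : Type*} (s : Finset ι)
    (w : n → ℂ) (v : ι → n → ℂ) :
    dotProduct w (∑ k ∈ s, v k) = ∑ k ∈ s, dotProduct w (v k) := by
  simp only [dotProduct, Finset.sum_apply, Finset.mul_sum]
  rw [Finset.sum_comm]

lemma span_onbasis {n r : ℕ} (y : Fin r → EuclideanSpace ℂ (Fin n)) :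
    ∃ (m : ℕ) (u : Fin m → EuclideanSpace ℂ (Fin n)), m ≤ r ∧ Orthonormal ℂ u ∧
      ∀ z ∈ Submodule.span ℂ (Set.range y), z = ∑ i, ⟪u i, z⟫_ℂ • u i := by
  set V : Submodule ℂ (EuclideanSpace ℂ (Fin n)) := Submodule.span ℂ (Set.range y) with hV
  have hfr : Module.finrank ℂ V ≤ r := by
    have := finrank_range_le_card (R := ℂ) y
    simpa [Set.finrank, hV] using this
  set b : OrthonormalBasis (Fin (Module.finrank ℂ V)) ℂ V := stdOrthonormalBasis ℂ V with hb
  refine ⟨_, fun i => (b i : EuclideanSpace ℂ (Fin n)), hfr, ?_, ?_⟩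
  · rw [orthonormal_iff_ite]
    intro i j
    have hbo := b.orthonormal
    rw [orthonormal_iff_ite] at hbo
    simpa [Submodule.coe_inner] using hbo i j
  · intro z hz
    have h := b.sum_repr' ⟨z, hz⟩
    have hcoe := congrArg (Subtype.val) h
    rw [Submodule.coe_sum] at hcoe
    simp only [Submodule.coe_smul, Submodule.coe_inner] at hcoe
    exact hcoe.symm

lemma parseval' {E' : Type*} [NormedAddCommGroup E'] [InnerProductSpace ℂ E'] {m : ℕ}
    (u : Fin m → E') (z : E') (hexp : z = ∑ i, ⟪u i, z⟫_ℂ • u i) :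
    ∑ i, ‖⟪u i, z⟫_ℂ‖ ^ 2 = ‖z‖ ^ 2 := by
  have h1 : ⟪z, z⟫_ℂ = ∑ i, ⟪u i, z⟫_ℂ * ⟪z, u i⟫_ℂ := by
    calc ⟪z, z⟫_ℂ = ⟪z, ∑ i, ⟪u i, z⟫_ℂ • u i⟫_ℂ := by rw [← hexp]
      _ = ∑ i, ⟪z, ⟪u i, z⟫_ℂ • u i⟫_ℂ := inner_sum _ _ _
      _ = ∑ i, ⟪u i, z⟫_ℂ * ⟪z, u i⟫_ℂ :=
          Finset.sum_congr rfl fun i _ => inner_smul_right _ _ _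
  rw [@norm_sq_eq_re_inner ℂ, h1, map_sum]
  refine Finset.sum_congr rfl fun i _ => ?_
  have h3 : ⟪z, u i⟫_ℂ = (starRingEnd ℂ) ⟪u i, z⟫_ℂ := (inner_conj_symm _ _).symm
  rw [h3, Complex.mul_conj]
  simp [← Complex.normSq_eq_norm_sq]

lemma rearrange {d r : ℕ} (hr : 1 ≤ r) (hrd : r ≤ d) (κ : Fin d → ℝ)
    (hκ0 : ∀ k, 0 ≤ κ k) (hκa : Antitone κ) (t : Fin d → ℝ)
    (ht0 : ∀ k, 0 ≤ t k) (ht1 : ∀ k, t k ≤ 1) (hts : ∑ k, t k ≤ r) :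
    ∑ k, κ k ^ 2 * t k ≤ ∑ k : Fin r, κ (Fin.castLE hrd k) ^ 2 := by
  classical
  set H : Finset (Fin d) := Finset.univ.image (Fin.castLE hrd) with hH
  have hinj : Function.Injective (Fin.castLE hrd) := Fin.castLE_injective hrd
  have hmem : ∀ k : Fin d, k ∈ H ↔ (k : ℕ) < r := by
    intro k
    constructor
    · rintro hk
      rw [hH, Finset.mem_image] at hk
      obtain ⟨j, -, rfl⟩ := hk
      exact j.isLt
    · intro hk
      rw [hH, Finset.mem_image]
      exact ⟨⟨(k : ℕ), hk⟩, Finset.mem_univ _, rfl⟩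
  have hcard : H.card = r := by
    rw [hH, Finset.card_image_of_injective _ hinj, Finset.card_univ, Fintype.card_fin]
  have hKi : r - 1 < d := by omega
  set K : ℝ := κ ⟨r - 1, hKi⟩ with hK
  have hK0 : 0 ≤ K := hκ0 _
  have hsplit : ∑ k, κ k ^ 2 * t k
      = ∑ k ∈ H, κ k ^ 2 * t k + ∑ k ∈ Hᶜ, κ k ^ 2 * t k :=
    (Finset.sum_add_sum_compl H _).symm
  have htail : ∀ k ∈ Hᶜ, κ k ^ 2 * t k ≤ K ^ 2 * t k := by
    intro k hk
    rw [Finset.mem_compl, hmem] at hk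
    have hle : κ k ≤ K := hκa (by simp [Fin.le_def]; omega)
    exact mul_le_mul_of_nonneg_right (by nlinarith [hκ0 k]) (ht0 k)
  have h1 : ∑ k ∈ Hᶜ, κ k ^ 2 * t k ≤ K ^ 2 * ∑ k ∈ Hᶜ, t k := by
    rw [Finset.mul_sum]; exact Finset.sum_le_sum htail
  have h2 : ∑ k ∈ Hᶜ, t k ≤ r - ∑ k ∈ H, t k := by
    have := Finset.sum_add_sum_compl H t
    linarith
  have h3 : (K ^ 2) * (r - ∑ k ∈ H, t k) = ∑ k ∈ H, K ^ 2 * (1 - t k) := by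
    rw [← Finset.mul_sum, Finset.sum_sub_distrib, Finset.sum_const, hcard, nsmul_eq_mul, mul_one]
  have h4 : ∀ k ∈ H, K ^ 2 * (1 - t k) ≤ κ k ^ 2 * (1 - t k) := by
    intro k hk
    rw [hmem] at hk
    have hle : K ≤ κ k := hκa (by simp [Fin.le_def]; omega)
    have hsq : K ^ 2 ≤ κ k ^ 2 := by nlinarith
    exact mul_le_mul_of_nonneg_right hsq (by linarith [ht1 k])
  have h5 : ∑ k ∈ H, (κ k ^ 2 * t k + κ k ^ 2 * (1 - t k)) = ∑ k ∈ H, κ k ^ 2 := by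
    refine Finset.sum_congr rfl fun k _ => by ring
  have h6 : ∑ k ∈ H, κ k ^ 2 = ∑ k : Fin r, κ (Fin.castLE hrd k) ^ 2 := by
    rw [hH, Finset.sum_image (fun a _ b _ h => hinj h)]
  calc ∑ k, κ k ^ 2 * t k
      ≤ ∑ k ∈ H, κ k ^ 2 * t k + K ^ 2 * (r - ∑ k ∈ H, t k) := by
        rw [hsplit]
        have := mul_le_mul_of_nonneg_left h2 (sq_nonneg K)
        linarith
    _ = ∑ k ∈ H, (κ k ^ 2 * t k + K ^ 2 * (1 - t k)) := by
        rw [h3, ← Finset.sum_add_distrib]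
    _ ≤ ∑ k ∈ H, (κ k ^ 2 * t k + κ k ^ 2 * (1 - t k)) := by
        refine Finset.sum_le_sum fun k hk => by linarith [h4 k hk]
    _ = _ := by rw [h5, h6]

lemma overlap_sq_le {dA dB r : ℕ} (hr : 1 ≤ r) (hrd : r ≤ min dA dB)
    (κ : Fin (min dA dB) → ℝ) (hκ0 : ∀ k, 0 ≤ κ k) (hκa : Antitone κ)
    (e : Fin (min dA dB) → Fin dA → ℂ) (f : Fin (min dA dB) → Fin dB → ℂ)
    (hONe : ONFam e) (hONf : ONFam f)
    (φ : Fin dA × Fin dB → ℂ)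
    (hφ : φ = ∑ k, (κ k : ℂ) • tensorVec (e k) (f k))
    (ψ : Fin dA × Fin dB → ℂ) (hψu : IsUnitVec ψ) (hψr : SchmidtRankLE r ψ) :
    ‖dotProduct (star φ) ψ‖ ^ 2 ≤ ∑ k : Fin r, κ (Fin.castLE hrd k) ^ 2 := by
  classical
  obtain ⟨x, y, hxy⟩ := hψr
  set a : Fin (min dA dB) → Fin r → ℂ :=
    fun k j => dotProduct (star (e k)) (x j) with ha
  set z : Fin (min dA dB) → Fin dB → ℂ := fun k b => ∑ j, a k j * y j b with hz
  -- Step A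
  have hA : dotProduct (star φ) ψ
      = ∑ k, (κ k : ℂ) * dotProduct (star (f k)) (z k) := by
    rw [hφ, hxy]
    rw [star_sum, sum_dotProduct']
    refine Finset.sum_congr rfl fun k _ => ?_
    rw [star_smul, smul_dotProduct, dotProduct_sum']
    have h1 : ∀ j, dotProduct (star (tensorVec (e k) (f k))) (tensorVec (x j) (y j))
        = a k j * dotProduct (star (f k)) (y j) := fun j => dot_tensor _ _ _ _
    simp only [h1]
    have h2 : ∑ j, a k j * dotProduct (star (f k)) (y j)
        = dotProduct (star (f k)) (z k) := by
      simp only [dotProduct, hz, Finset.mul_sum]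
      rw [Finset.sum_comm]
      refine Finset.sum_congr rfl fun j _ => Finset.sum_congr rfl fun b _ => by ring
    rw [h2]
    simp [smul_eq_mul, Complex.conj_ofReal]
  obtain ⟨m, u, hmr, huon, hrep⟩ := span_onbasis (fun j => toE (y j))
  have hzmem : ∀ k, toE (z k) = ∑ i, ⟪u i, toE (z k)⟫_ℂ • u i := by
    intro k
    refine hrep _ ?_
    have hpi : z k = ∑ j, a k j • y j := by
      funext bb
      simp [hz, Finset.sum_apply]
    rw [show toE (z k) = toE (∑ j, a k j • y j) from congrArg toE hpi,
      show toE (∑ j, a k j • y j) = ∑ j, a k j • toE (y j) by simp [toE, WithLp.toLp_sum]]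
    exact Submodule.sum_mem _ fun j _ =>
      Submodule.smul_mem _ _ (Submodule.subset_span ⟨j, rfl⟩)
  -- expansion of the f-z pairing in the basis
  have hfz : ∀ k, dotProduct (star (f k)) (z k)
      = ∑ i, ⟪u i, toE (z k)⟫_ℂ * ⟪toE (f k), u i⟫_ℂ := by
    intro k
    rw [← inner_toE]
    conv_lhs => rw [show toE (z k) = ∑ i, ⟪u i, toE (z k)⟫_ℂ • u i from hzmem k]
    rw [inner_sum]
    exact Finset.sum_congr rfl fun i _ => inner_smul_right _ _ _
  -- norms
  have hFnorm : ∀ k, ‖toE (f k)‖ = 1 := fun k => (onfam_orthonormal hONf).1 k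
  have hunorm : ∀ i, ‖u i‖ = 1 := fun i => huon.1 i
  -- triangle inequality
  set S : ℝ := ∑ k, ∑ i, (κ k * ‖⟪toE (f k), u i⟫_ℂ‖) * ‖⟪u i, toE (z k)⟫_ℂ‖ with hS
  have htri : ‖dotProduct (star φ) ψ‖ ≤ S := by
    rw [hA]
    refine (norm_sum_le _ _).trans ?_
    refine Finset.sum_le_sum fun k _ => ?_
    rw [norm_mul, Complex.norm_real, Real.norm_of_nonneg (hκ0 k), hfz k]
    calc κ k * ‖∑ i, ⟪u i, toE (z k)⟫_ℂ * ⟪toE (f k), u i⟫_ℂ‖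
        ≤ κ k * ∑ i, ‖⟪u i, toE (z k)⟫_ℂ * ⟪toE (f k), u i⟫_ℂ‖ :=
          mul_le_mul_of_nonneg_left (norm_sum_le _ _) (hκ0 k)
      _ = ∑ i, (κ k * ‖⟪toE (f k), u i⟫_ℂ‖) * ‖⟪u i, toE (z k)⟫_ℂ‖ := by
          rw [Finset.mul_sum]
          refine Finset.sum_congr rfl fun i _ => by rw [norm_mul]; ring
  have hS0 : 0 ≤ S := by
    rw [hS]
    refine Finset.sum_nonneg fun k _ => Finset.sum_nonneg fun i _ =>
      mul_nonneg (mul_nonneg (hκ0 k) (norm_nonneg _)) (norm_nonneg _)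
  -- Cauchy-Schwarz
  set t : Fin (min dA dB) → ℝ := fun k => ∑ i, ‖⟪toE (f k), u i⟫_ℂ‖ ^ 2 with htdef
  have hCS : S ^ 2 ≤ (∑ k, κ k ^ 2 * t k) * (∑ k, ‖toE (z k)‖ ^ 2) := by
    have hcs := Finset.sum_mul_sq_le_sq_mul_sq Finset.univ
      (fun p : Fin (min dA dB) × Fin m => κ p.1 * ‖⟪toE (f p.1), u p.2⟫_ℂ‖)
      (fun p : Fin (min dA dB) × Fin m => ‖⟪u p.2, toE (z p.1)⟫_ℂ‖)
    rw [Fintype.sum_prod_type, Fintype.sum_prod_type, Fintype.sum_prod_type] at hcs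
    have e1 : ∀ k : Fin (min dA dB),
        ∑ i, (κ k * ‖⟪toE (f k), u i⟫_ℂ‖) ^ 2 = κ k ^ 2 * t k := by
      intro k
      rw [htdef, Finset.mul_sum]
      exact Finset.sum_congr rfl fun i _ => by ring
    have e2 : ∀ k : Fin (min dA dB), ∑ i, ‖⟪u i, toE (z k)⟫_ℂ‖ ^ 2 = ‖toE (z k)‖ ^ 2 :=
      fun k => parseval' u (toE (z k)) (hzmem k)
    calc S ^ 2 ≤ (∑ k, ∑ i, (κ k * ‖⟪toE (f k), u i⟫_ℂ‖) ^ 2)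
          * (∑ k, ∑ i, ‖⟪u i, toE (z k)⟫_ℂ‖ ^ 2) := hcs
      _ = _ := by rw [Finset.sum_congr rfl fun k _ => e1 k,
          Finset.sum_congr rfl fun k _ => e2 k]
  -- bounds on t
  have ht0 : ∀ k, 0 ≤ t k := fun k => Finset.sum_nonneg fun i _ => sq_nonneg _
  have ht1 : ∀ k, t k ≤ 1 := by
    intro k
    have hb := huon.sum_inner_products_le (toE (f k)) (s := Finset.univ)
    rw [hFnorm k] at hb
    calc t k = ∑ i, ‖⟪u i, toE (f k)⟫_ℂ‖ ^ 2 :=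
          Finset.sum_congr rfl fun i _ => by rw [norm_inner_symm]
      _ ≤ 1 ^ 2 := hb
      _ = 1 := one_pow 2
  have hts : ∑ k, t k ≤ (r : ℝ) := by
    have h1 : ∑ k, t k = ∑ i : Fin m, ∑ k, ‖⟪toE (f k), u i⟫_ℂ‖ ^ 2 := by
      rw [htdef, Finset.sum_comm]
    have h2 : ∀ i : Fin m, ∑ k, ‖⟪toE (f k), u i⟫_ℂ‖ ^ 2 ≤ 1 := by
      intro i
      have hb := (onfam_orthonormal hONf).sum_inner_products_le (u i) (s := Finset.univ)
      rw [hunorm i] at hb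
      simpa using hb
    calc ∑ k, t k ≤ ∑ _i : Fin m, (1 : ℝ) := by
          rw [h1]; exact Finset.sum_le_sum fun i _ => h2 i
      _ = m := by simp
      _ ≤ r := by exact_mod_cast hmr
  -- bound on the z-norms
  have hznorm : ∑ k, ‖toE (z k)‖ ^ 2 ≤ 1 := by
    have hcol : ∀ k bb, z k bb = ⟪toE (e k), toE (fun aa => ψ (aa, bb))⟫_ℂ := by
      intro k bb
      rw [inner_toE]
      simp only [hz, ha, dotProduct, hxy, Finset.sum_apply, tensorVec,
        Pi.star_apply, Finset.sum_mul, Finset.mul_sum]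
      rw [Finset.sum_comm]
      refine Finset.sum_congr rfl fun aa _ => Finset.sum_congr rfl fun j _ => by ring
    have hψn : ∑ p : Fin dA × Fin dB, ‖ψ p‖ ^ 2 = 1 := by
      have h := hψu
      rw [IsUnitVec] at h
      have h1 : (dotProduct (star ψ) ψ).re = 1 := by rw [h]; rfl
      rw [← h1]
      simp [dotProduct, ← Complex.normSq_eq_norm_sq,
        Complex.normSq_apply]
    calc ∑ k, ‖toE (z k)‖ ^ 2 = ∑ bb : Fin dB, ∑ k, ‖z k bb‖ ^ 2 := by
          rw [Finset.sum_congr rfl fun k _ => norm_sq_toE (z k), Finset.sum_comm]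
      _ ≤ ∑ bb : Fin dB, ‖toE (fun aa => ψ (aa, bb))‖ ^ 2 := by
          refine Finset.sum_le_sum fun bb _ => ?_
          have hb := (onfam_orthonormal hONe).sum_inner_products_le
            (toE (fun aa => ψ (aa, bb))) (s := Finset.univ)
          calc ∑ k, ‖z k bb‖ ^ 2
              = ∑ k, ‖⟪toE (e k), toE (fun aa => ψ (aa, bb))⟫_ℂ‖ ^ 2 :=
                Finset.sum_congr rfl fun k _ => by rw [hcol k bb]
            _ ≤ _ := hb
      _ = ∑ p : Fin dA × Fin dB, ‖ψ p‖ ^ 2 := by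
          rw [Fintype.sum_prod_type, Finset.sum_comm]
          exact Finset.sum_congr rfl fun bb _ => norm_sq_toE _
      _ = 1 := hψn
  -- combine
  have hB := rearrange hr hrd κ hκ0 hκa t ht0 ht1 hts
  have hB0 : 0 ≤ ∑ k, κ k ^ 2 * t k :=
    Finset.sum_nonneg fun k _ => mul_nonneg (sq_nonneg _) (ht0 k)
  calc ‖dotProduct (star φ) ψ‖ ^ 2 ≤ S ^ 2 := by
        have hn := norm_nonneg (dotProduct (star φ) ψ)
        nlinarith
    _ ≤ (∑ k, κ k ^ 2 * t k) * (∑ k, ‖toE (z k)‖ ^ 2) := hCS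
    _ ≤ (∑ k, κ k ^ 2 * t k) * 1 := mul_le_mul_of_nonneg_left hznorm hB0
    _ = ∑ k, κ k ^ 2 * t k := mul_one _
    _ ≤ _ := hB


/-- Schmidt-number criterion from a projection: if ⟨φ, ρ φ⟩ exceeds the sum of
the r largest squared Schmidt coefficients of φ, then ρ has Schmidt number greater than r. -/
theorem schmidt_number_criterion_projection (dA dB r : ℕ) (hA : 1 ≤ dA) (hB : 1 ≤ dB)
    (hr : 1 ≤ r) (hrd : r ≤ min dA dB)
    (κ : Fin (min dA dB) → ℝ) (hκ0 : ∀ k, 0 ≤ κ k) (hκa : Antitone κ)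
    (e : Fin (min dA dB) → Fin dA → ℂ) (f : Fin (min dA dB) → Fin dB → ℂ)
    (hONe : ONFam e) (hONf : ONFam f)
    (φ : Fin dA × Fin dB → ℂ)
    (hφ : φ = ∑ k, (κ k : ℂ) • tensorVec (e k) (f k))
    (hunit : IsUnitVec φ)
    (ρ : Matrix (Fin dA × Fin dB) (Fin dA × Fin dB) ℂ)
    (hρ : ρ.PosSemidef) (htr : ρ.trace = 1)
    (hcond : (∑ k : Fin r, (κ (Fin.castLE hrd k)) ^ 2)
        < (dotProduct (star φ) (ρ.mulVec φ)).re) :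
    ρ ∉ SNle dA dB r := by
  intro hmem
  obtain ⟨N, p, ψ, hp0, hp1, hψu, hψr, hEq⟩ := hmem
  set B : ℝ := ∑ k : Fin r, (κ (Fin.castLE hrd k)) ^ 2 with hB
  have hproj : ∀ w : Fin dA × Fin dB → ℂ,
      dotProduct (star φ) ((projOp w).mulVec φ)
        = ((starRingEnd ℂ) (dotProduct (star φ) w)) * dotProduct (star φ) w := by
    intro w
    have h1 : (projOp w).mulVec φ = (dotProduct (star w) φ) • w := by
      funext q
      simp only [projOp, Matrix.mulVec, Matrix.vecMulVec_apply, dotProduct,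
        Pi.smul_apply, smul_eq_mul, Finset.sum_mul]
      refine Finset.sum_congr rfl fun b _ => by ring
    have h2 : dotProduct (star w) φ = (starRingEnd ℂ) (dotProduct (star φ) w) := by
      simp only [dotProduct, map_sum, map_mul, Pi.star_apply,
        Complex.star_def, Complex.conj_conj, RingHom.id_apply, RingHomCompTriple.comp_apply]
      exact Finset.sum_congr rfl fun q _ => by ring
    rw [h1, dotProduct_smul, h2, smul_eq_mul]
  have hexp : (dotProduct (star φ) (ρ.mulVec φ)).re
      = ∑ i, p i * ‖dotProduct (star φ) (ψ i)‖ ^ 2 := by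
    rw [hEq]
    have hmv : (∑ i, (p i : ℂ) • projOp (ψ i)).mulVec φ
        = ∑ i, (p i : ℂ) • ((projOp (ψ i)).mulVec φ) := by
      funext q
      simp only [Matrix.mulVec, dotProduct, Finset.sum_apply, Matrix.sum_apply,
        Pi.smul_apply, Matrix.smul_apply, smul_eq_mul, Finset.sum_mul, Finset.mul_sum]
      rw [Finset.sum_comm]
      exact Finset.sum_congr rfl fun i _ => Finset.sum_congr rfl fun q' _ => by ring
    rw [hmv, dotProduct_sum', Complex.re_sum]
    refine Finset.sum_congr rfl fun i _ => ?_
    rw [dotProduct_smul, hproj (ψ i)]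
    set s : ℂ := dotProduct (star φ) (ψ i) with hs
    have : (starRingEnd ℂ) s * s = (Complex.normSq s : ℂ) := by
      rw [mul_comm, Complex.mul_conj]
    rw [smul_eq_mul, this]
    have : ((p i : ℂ) * (Complex.normSq s : ℂ)) = ((p i * Complex.normSq s : ℝ) : ℂ) := by
      push_cast; ring
    rw [this, Complex.ofReal_re]
    congr 1
    rw [Complex.sq_norm]
  have hbound : ∀ i, ‖dotProduct (star φ) (ψ i)‖ ^ 2 ≤ B :=
    fun i => overlap_sq_le hr hrd κ hκ0 hκa e f hONe hONf φ hφ (ψ i) (hψu i) (hψr i)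
  have hle : (dotProduct (star φ) (ρ.mulVec φ)).re ≤ B := by
    rw [hexp]
    calc ∑ i, p i * ‖dotProduct (star φ) (ψ i)‖ ^ 2
        ≤ ∑ i, p i * B := Finset.sum_le_sum fun i _ =>
          mul_le_mul_of_nonneg_left (hbound i) (hp0 i)
      _ = B := by rw [← Finset.sum_mul, hp1, one_mul]
  linarith


end SNpaper
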